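/- arXiv:2012.15498 — 2 statements merged into one kernel-verified Lean document; each statement's English description precedes it below -/
import Mathlib

section
/- Golden–Thompson inequality: for any two Hermitian matrices H, K ∈ ℂ^{D×D}, tr(exp(H+K)) ≤ tr(exp(H)·exp(K)). -/
open Matrix BigOperators NormedSpace Filter
open scoped ComplexOrder Topology

noncomputable def matFun {D : ℕ} (f : ℝ → ℝ) (A : Matrix (Fin D) (Fin D) ℂ) :
    Matrix (Fin D) (Fin D) ℂ :=
  if h : A.IsHermitian then
    (h.eigenvectorUnitary : Matrix (Fin D) (Fin D) ℂ) *
      Matrix.diagonal (fun i => (f (h.eigenvalues i) : ℂ)) *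
      star (h.eigenvectorUnitary : Matrix (Fin D) (Fin D) ℂ)
  else 0

noncomputable def matLog {D : ℕ} : Matrix (Fin D) (Fin D) ℂ → Matrix (Fin D) (Fin D) ℂ :=
  matFun Real.log

noncomputable def matExp {D : ℕ} : Matrix (Fin D) (Fin D) ℂ → Matrix (Fin D) (Fin D) ℂ :=
  matFun Real.exp

def IsDensity {D : ℕ} (ρ : Matrix (Fin D) (Fin D) ℂ) : Prop :=
  ρ.PosSemidef ∧ ρ.trace = 1


namespace GTaux

variable {D : ℕ}

local notation "M" => Matrix (Fin D) (Fin D) ℂ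

set_option maxHeartbeats 1000000
lemma trace_mul_re_eq (X Y : M) :
    ((X * Y).trace).re = ∑ i, ∑ j, (X i j * Y j i).re := by
  simp [Matrix.trace, Matrix.diag, Matrix.mul_apply, Complex.re_sum]

lemma herm_apply_symm {X : M} (hX : X.IsHermitian) (i j : Fin D) :
    X j i = (starRingEnd ℂ) (X i j) := by
  conv_lhs => rw [← hX]
  simp [Matrix.conjTranspose_apply]

lemma trace_herm_sq_re (X : M) (hX : X.IsHermitian) :
    ((X * X).trace).re = ∑ i, ∑ j, Complex.normSq (X i j) := by
  rw [trace_mul_re_eq]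
  refine Finset.sum_congr rfl fun i _ => Finset.sum_congr rfl fun j _ => ?_
  have h : X j i = (starRingEnd ℂ) (X i j) := by
    conv_lhs => rw [← hX]
    simp [Matrix.conjTranspose_apply]
  rw [h, Complex.mul_conj]
  simp

lemma trace_herm_sq_nonneg (X : M) (hX : X.IsHermitian) :
    0 ≤ ((X * X).trace).re := by
  rw [trace_herm_sq_re X hX]
  exact Finset.sum_nonneg fun i _ => Finset.sum_nonneg fun j _ => Complex.normSq_nonneg _

/-- Cauchy–Schwarz for the trace of a product of Hermitian matrices. -/
lemma cs_herm (X Y : M) (hX : X.IsHermitian) (hY : Y.IsHermitian) :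
    ((X * Y).trace).re ≤
      Real.sqrt (((X * X).trace).re) * Real.sqrt (((Y * Y).trace).re) := by
  rw [trace_mul_re_eq, trace_herm_sq_re X hX, trace_herm_sq_re Y hY]
  have h1 : ∑ i, ∑ j, (X i j * Y j i).re ≤
      ∑ i, ∑ j, ‖X i j‖ * ‖Y i j‖ := by
    refine Finset.sum_le_sum fun i _ => Finset.sum_le_sum fun j _ => ?_
    have h : Y j i = (starRingEnd ℂ) (Y i j) := by
      conv_lhs => rw [← hY]; simp [Matrix.conjTranspose_apply]
    calc (X i j * Y j i).re ≤ ‖X i j * Y j i‖ := Complex.re_le_norm _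
      _ = ‖X i j‖ * ‖Y i j‖ := by
          rw [h, norm_mul, Complex.norm_conj]
  refine h1.trans ?_
  rw [← Finset.sum_product']
  have h2 := Finset.sum_mul_sq_le_sq_mul_sq (Finset.univ : Finset (Fin D × Fin D))
    (fun p => ‖X p.1 p.2‖) (fun p => ‖Y p.1 p.2‖)
  have h3 : (0:ℝ) ≤ ∑ p : Fin D × Fin D, ‖X p.1 p.2‖ * ‖Y p.1 p.2‖ :=
    Finset.sum_nonneg fun p _ => by positivity
  have h4 := Real.sqrt_le_sqrt h2
  rw [Real.sqrt_sq h3, Real.sqrt_mul (by positivity)] at h4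
  refine le_of_eq_of_le ?_ (h4.trans (le_of_eq ?_))
  · rfl
  · congr 1
    · rw [← Finset.sum_product']
      refine congrArg Real.sqrt (Finset.sum_congr rfl fun p _ => ?_)
      rw [Complex.sq_norm]
    · rw [← Finset.sum_product']
      refine congrArg Real.sqrt (Finset.sum_congr rfl fun p _ => ?_)
      rw [Complex.sq_norm]

lemma pow_mul_comm_aux (X Y : M) (m : ℕ) :
    (Y * X) ^ (m + 1) = Y * (X * Y) ^ m * X := by
  induction m with
  | zero => simp
  | succ m ih =>
      rw [pow_succ, ih, pow_succ]
      noncomm_ring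

lemma trace_mul_pow_comm (X Y : M) {q : ℕ} (hq : q ≠ 0) :
    ((X * Y) ^ q).trace = ((Y * X) ^ q).trace := by
  obtain ⟨m, rfl⟩ := Nat.exists_eq_succ_of_ne_zero hq
  rw [pow_mul_comm_aux X Y m, Matrix.trace_mul_cycle]
  congr 1
  rw [pow_succ']


lemma scalar_ineq {a b : ℝ} (ha : 0 < a) (hb : 0 < b) : 2 ≤ b * a⁻¹ + a * b⁻¹ := by
  rw [← div_eq_mul_inv, ← div_eq_mul_inv, div_add_div _ _ ha.ne' hb.ne',
    le_div_iff₀ (by positivity)]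
  nlinarith [sq_nonneg (a - b)]

lemma diag_core (R' : M) (hR' : R'.IsHermitian) (d : Fin D → ℝ) (hd : ∀ i, 0 < d i) :
    ((R' * R').trace).re ≤
      ((R' * Matrix.diagonal (fun i => ((d i : ℝ) : ℂ)) * R'
        * Matrix.diagonal (fun i => (((d i)⁻¹ : ℝ) : ℂ))).trace).re := by
  have hterm : ∀ i j : Fin D,
      ((R' * Matrix.diagonal (fun i => ((d i : ℝ) : ℂ))) i j
        * ((R' * Matrix.diagonal (fun i => (((d i)⁻¹ : ℝ) : ℂ))) j i)).re
      = Complex.normSq (R' i j) * (d j * (d i)⁻¹) := by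
    intro i j
    rw [Matrix.mul_diagonal, Matrix.mul_diagonal, herm_apply_symm hR' i j]
    rw [show (R' i j * ((d j : ℝ) : ℂ)) * ((starRingEnd ℂ) (R' i j) * (((d i)⁻¹ : ℝ) : ℂ))
        = (R' i j * (starRingEnd ℂ) (R' i j)) * (((d j : ℝ) : ℂ) * (((d i)⁻¹ : ℝ) : ℂ))
      from by ring]
    rw [Complex.mul_conj, ← Complex.ofReal_mul, ← Complex.ofReal_mul, Complex.ofReal_re]
  have hre : ((R' * Matrix.diagonal (fun i => ((d i : ℝ) : ℂ)) * R'
        * Matrix.diagonal (fun i => (((d i)⁻¹ : ℝ) : ℂ))).trace).re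
      = ∑ p : Fin D × Fin D, Complex.normSq (R' p.1 p.2) * (d p.2 * (d p.1)⁻¹) := by
    rw [show R' * Matrix.diagonal (fun i => ((d i : ℝ) : ℂ)) * R'
        * Matrix.diagonal (fun i => (((d i)⁻¹ : ℝ) : ℂ))
        = (R' * Matrix.diagonal (fun i => ((d i : ℝ) : ℂ)))
          * (R' * Matrix.diagonal (fun i => (((d i)⁻¹ : ℝ) : ℂ))) from by noncomm_ring]
    rw [trace_mul_re_eq, ← Finset.sum_product']
    exact Finset.sum_congr rfl fun p _ => hterm p.1 p.2
  have hre1 : ((R' * R').trace).re = ∑ p : Fin D × Fin D, Complex.normSq (R' p.1 p.2) := by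
    rw [trace_mul_re_eq, ← Finset.sum_product']
    refine Finset.sum_congr rfl fun p _ => ?_
    rw [herm_apply_symm hR' p.1 p.2, Complex.mul_conj]
    simp
  rw [hre, hre1]
  have hswap : ∑ p : Fin D × Fin D, Complex.normSq (R' p.2 p.1) * (d p.1 * (d p.2)⁻¹)
      = ∑ p : Fin D × Fin D, Complex.normSq (R' p.1 p.2) * (d p.2 * (d p.1)⁻¹) :=
    Fintype.sum_equiv (Equiv.prodComm _ _) _ _ (fun p => rfl)
  have hkey : ∀ p : Fin D × Fin D, 2 * Complex.normSq (R' p.1 p.2)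
      ≤ Complex.normSq (R' p.1 p.2) * (d p.2 * (d p.1)⁻¹)
        + Complex.normSq (R' p.2 p.1) * (d p.1 * (d p.2)⁻¹) := by
    intro p
    have hnsq : Complex.normSq (R' p.2 p.1) = Complex.normSq (R' p.1 p.2) := by
      rw [herm_apply_symm hR' p.1 p.2, Complex.normSq_conj]
    rw [hnsq, ← mul_add]
    have h2 := scalar_ineq (hd p.1) (hd p.2)
    nlinarith [Complex.normSq_nonneg (R' p.1 p.2)]
  have hsum := Finset.sum_le_sum (fun p (_ : p ∈ (Finset.univ : Finset (Fin D × Fin D))) => hkey p)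
  rw [Finset.sum_add_distrib, hswap, ← Finset.mul_sum, ← two_mul] at hsum
  linarith

/-- `tr (R²) ≤ tr (R A R A⁻¹)` for Hermitian `R` and positive definite `A`. -/
lemma herm_conj_ineq (R A : M) (hR : R.IsHermitian) (hA : A.PosDef) :
    ((R * R).trace).re ≤ ((R * A * R * A⁻¹).trace).re := by
  classical
  have hU1 : (hA.1.eigenvectorUnitary : M) * star (hA.1.eigenvectorUnitary : M) = 1 :=
    (Matrix.mem_unitaryGroup_iff).mp hA.1.eigenvectorUnitary.2
  have hU2 : star (hA.1.eigenvectorUnitary : M) * (hA.1.eigenvectorUnitary : M) = 1 :=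
    (Matrix.mem_unitaryGroup_iff').mp hA.1.eigenvectorUnitary.2
  set U : M := (hA.1.eigenvectorUnitary : M)
  set d : Fin D → ℝ := hA.1.eigenvalues with hddef
  have hd : ∀ i, 0 < d i := fun i => hA.eigenvalues_pos i
  have hcancel : ∀ X : M, star U * (U * X) = X := fun X => by
    rw [← Matrix.mul_assoc, hU2, Matrix.one_mul]
  have hcancel' : ∀ X : M, U * (star U * X) = X := fun X => by
    rw [← Matrix.mul_assoc, hU1, Matrix.one_mul]
  have hofreal : (RCLike.ofReal ∘ d : Fin D → ℂ) = fun i => ((d i : ℝ) : ℂ) := rfl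
  have hspec : A = U * Matrix.diagonal (fun i => ((d i : ℝ) : ℂ)) * star U := by
    have := hA.1.spectral_theorem
    rwa [hofreal] at this
  have hDD' : Matrix.diagonal (fun i => ((d i : ℝ) : ℂ))
      * Matrix.diagonal (fun i => (((d i)⁻¹ : ℝ) : ℂ)) = 1 := by
    rw [Matrix.diagonal_mul_diagonal]
    have : (fun i => ((d i : ℝ) : ℂ) * (((d i)⁻¹ : ℝ) : ℂ)) = fun _ => (1 : ℂ) := by
      funext i
      rw [← Complex.ofReal_mul, mul_inv_cancel₀ (hd i).ne']
      norm_num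
    rw [this, Matrix.diagonal_one]
  have hAinv : A⁻¹ = U * Matrix.diagonal (fun i => (((d i)⁻¹ : ℝ) : ℂ)) * star U := by
    apply Matrix.inv_eq_right_inv
    rw [hspec]
    calc U * Matrix.diagonal (fun i => ((d i : ℝ) : ℂ)) * star U
          * (U * Matrix.diagonal (fun i => (((d i)⁻¹ : ℝ) : ℂ)) * star U)
        = U * (Matrix.diagonal (fun i => ((d i : ℝ) : ℂ))
            * Matrix.diagonal (fun i => (((d i)⁻¹ : ℝ) : ℂ))) * star U := by
          simp only [Matrix.mul_assoc, hcancel, hcancel']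
      _ = 1 := by rw [hDD', Matrix.mul_one, hU1]
  have t1 : R * R = U * ((star U * R * U) * (star U * R * U)) * star U := by
    simp only [Matrix.mul_assoc, hcancel, hcancel', hU1, hU2, Matrix.mul_one, Matrix.one_mul]
  have t2 : R * A * R * A⁻¹ = U * ((star U * R * U)
      * Matrix.diagonal (fun i => ((d i : ℝ) : ℂ)) * (star U * R * U)
      * Matrix.diagonal (fun i => (((d i)⁻¹ : ℝ) : ℂ))) * star U := by
    rw [hAinv]
    nth_rewrite 1 [hspec]
    simp only [Matrix.mul_assoc, hcancel, hcancel', hU1, hU2, Matrix.mul_one, Matrix.one_mul]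
  have conj_trace : ∀ X : M, (U * X * star U).trace = X.trace := fun X => by
    rw [Matrix.trace_mul_cycle, hU2, Matrix.one_mul]
  have hR' : (star U * R * U).IsHermitian := by
    have := Matrix.isHermitian_conjTranspose_mul_mul U hR
    rwa [← Matrix.star_eq_conjTranspose] at this
  calc ((R * R).trace).re
      = (((star U * R * U) * (star U * R * U)).trace).re := by rw [t1, conj_trace]
    _ ≤ (((star U * R * U) * Matrix.diagonal (fun i => ((d i : ℝ) : ℂ)) * (star U * R * U)
          * Matrix.diagonal (fun i => (((d i)⁻¹ : ℝ) : ℂ))).trace).re :=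
        diag_core _ hR' d hd
    _ = ((R * A * R * A⁻¹).trace).re := by rw [t2, conj_trace]



open scoped MatrixOrder in
/-- Step 1: `tr((AB)^{2q}) ≤ tr( ((AB)^q)ᴴ (AB)^q )` for `A` posdef, `B` psd. -/
lemma step1 (A B : M) (hA : A.PosDef) (hB : B.PosSemidef) (q : ℕ) :
    (((A * B) ^ (2 * q)).trace).re ≤ ((((A * B) ^ q)ᴴ * (A * B) ^ q).trace).re := by
  classical
  set S : M := CFC.sqrt A with hSdef
  have hS : S.PosSemidef := (CFC.sqrt_nonneg A).posSemidef
  have hSH : Sᴴ = S := hS.1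
  have hSS : S * S = A := CFC.sqrt_mul_sqrt_self A hA.posSemidef.nonneg
  have hdet : IsUnit S.det := by
    rw [isUnit_iff_ne_zero]
    intro h
    have : A.det = 0 := by rw [← hSS, Matrix.det_mul, h, mul_zero]
    exact hA.det_pos.ne' this
  have hSu : IsUnit S := (Matrix.isUnit_iff_isUnit_det S).mpr hdet
  have hSinv : S⁻¹ * S = 1 := Matrix.nonsing_inv_mul S hdet
  have hSinv' : S * S⁻¹ = 1 := Matrix.mul_nonsing_inv S hdet
  set P : M := S * B * S with hPdef
  have hP : P.PosSemidef := by
    have := hB.mul_mul_conjTranspose_same S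
    rwa [hSH] at this
  have hPq : ((P ^ q)ᴴ : M) = P ^ q := (hP.1.pow q)
  have hconj : A * B = S * P * S⁻¹ := by
    have : S * P * S⁻¹ = (S * S) * B * (S * S⁻¹) := by
      rw [hPdef]; noncomm_ring
    rw [this, hSinv', Matrix.mul_one, hSS]
  have hpow : ∀ m : ℕ, (A * B) ^ m = S * P ^ m * S⁻¹ := by
    intro m
    have hu := hSu.unit_spec
    rw [hconj, ← hu, ← Matrix.coe_units_inv, Units.conj_pow]
  have trace1 : ((A * B) ^ (2 * q)).trace = (P ^ q * P ^ q).trace := by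
    rw [hpow, Matrix.trace_mul_cycle, hSinv, Matrix.one_mul, ← pow_add, ← two_mul]
  have trace2 : (((A * B) ^ q)ᴴ * (A * B) ^ q).trace = (P ^ q * A * P ^ q * A⁻¹).trace := by
    have hct : ((A * B) ^ q)ᴴ = S⁻¹ * P ^ q * S := by
      rw [hpow q, Matrix.conjTranspose_mul, Matrix.conjTranspose_mul,
        Matrix.conjTranspose_nonsing_inv, hSH, hPq, Matrix.mul_assoc]
    rw [hct, hpow q]
    have e1 : (S⁻¹ * P ^ q * S) * (S * P ^ q * S⁻¹)
        = S⁻¹ * (P ^ q * S * S * P ^ q * S⁻¹) := by noncomm_ring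
    rw [e1, Matrix.trace_mul_comm]
    have e2 : P ^ q * S * S * P ^ q * S⁻¹ * S⁻¹ = P ^ q * (S * S) * P ^ q * (S⁻¹ * S⁻¹) := by
      noncomm_ring
    rw [e2, hSS, ← Matrix.mul_inv_rev, hSS]
  rw [trace1, trace2]
  exact herm_conj_ineq (P ^ q) A (hP.1.pow q) hA

/-- Extension from positive definite to positive semidefinite by continuity. -/
lemma extend_psd (n : ℕ)
    (h : ∀ A B : M, A.PosDef → B.PosDef →
      (((A * B) ^ n).trace).re ≤ ((A ^ n * B ^ n).trace).re) :
    ∀ A B : M, A.PosSemidef → B.PosSemidef →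
      (((A * B) ^ n).trace).re ≤ ((A ^ n * B ^ n).trace).re := by
  intro A B hA hB
  set f : ℝ → ℝ := fun ε =>
    (((A + (ε : ℂ) • 1) ^ n * (B + (ε : ℂ) • 1) ^ n).trace).re
      - ((((A + (ε : ℂ) • 1) * (B + (ε : ℂ) • 1)) ^ n).trace).re with hfdef
  have hcont : Continuous f := by
    have hm : ∀ C : M, Continuous fun ε : ℝ => C + (ε : ℂ) • (1 : M) := by
      intro C
      exact continuous_const.add ((Complex.continuous_ofReal.smul continuous_const))
    have hpow : ∀ (g : ℝ → M), Continuous g → ∀ m : ℕ, Continuous fun ε => (g ε) ^ m := by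
      intro g hg m
      induction m with
      | zero => simpa [pow_zero] using continuous_const
      | succ m ih =>
          simp only [pow_succ]
          exact ih.matrix_mul hg
    refine Continuous.sub ?_ ?_
    · exact Complex.continuous_re.comp
        (Continuous.matrix_trace ((hpow _ (hm A) n).matrix_mul (hpow _ (hm B) n)))
    · exact Complex.continuous_re.comp
        (Continuous.matrix_trace (hpow _ ((hm A).matrix_mul (hm B)) n))
  have hpos : ∀ ε : ℝ, 0 < ε → 0 ≤ f ε := by
    intro ε hε
    have hone : ((ε : ℂ) • (1 : M)).PosDef := by
      have : ((ε : ℂ) • (1 : M)) = Matrix.diagonal (fun _ => (ε : ℂ)) := by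
        ext i j
        by_cases hij : i = j
        · simp [hij, Matrix.one_apply]
        · simp [Matrix.diagonal_apply_ne _ hij, Matrix.one_apply, hij]
      rw [this]
      rw [Matrix.posDef_diagonal_iff]
      intro i
      exact_mod_cast hε
    have hA' : (A + (ε : ℂ) • 1).PosDef := Matrix.PosDef.posSemidef_add hA hone
    have hB' : (B + (ε : ℂ) • 1).PosDef := Matrix.PosDef.posSemidef_add hB hone
    have := h _ _ hA' hB'
    simp only [hfdef]
    linarith
  have h0 : 0 ≤ f 0 := by
    have htend : Filter.Tendsto f (nhdsWithin 0 (Set.Ioi 0)) (nhds (f 0)) :=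
      (hcont.tendsto 0).mono_left nhdsWithin_le_nhds
    refine ge_of_tendsto htend ?_
    filter_upwards [self_mem_nhdsWithin] with ε hε
    exact hpos ε hε
  have : f 0 = ((A ^ n * B ^ n).trace).re - (((A * B) ^ n).trace).re := by
    simp [hfdef]
  linarith [this ▸ h0]



lemma key (k : ℕ) :
    (∀ A B : M, A.PosSemidef → B.PosSemidef →
      (((A * B) ^ (2 ^ k)).trace).re ≤ ((A ^ (2 ^ k) * B ^ (2 ^ k)).trace).re)
    ∧ (∀ N : M, (((Nᴴ) ^ (2 ^ k) * N ^ (2 ^ k)).trace).re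
        ≤ (((Nᴴ * N) ^ (2 ^ k)).trace).re) := by
  induction k with
  | zero =>
      constructor
      · intro A B _ _; simp
      · intro N; simp
  | succ k ih =>
      obtain ⟨hT, hL⟩ := ih
      have hq : (2 : ℕ) ^ k ≠ 0 := pow_ne_zero _ two_ne_zero
      have hpow2 : (2 : ℕ) ^ (k + 1) = 2 * 2 ^ k := by rw [pow_succ, mul_comm]
      constructor
      · -- trace power inequality at level k+1
        refine extend_psd _ ?_
        intro A B hA hB
        rw [hpow2]
        calc (((A * B) ^ (2 * 2 ^ k)).trace).re
            ≤ ((((A * B) ^ (2 ^ k))ᴴ * (A * B) ^ (2 ^ k)).trace).re :=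
              step1 A B hA hB.posSemidef (2 ^ k)
          _ ≤ ((((A * B)ᴴ * (A * B)) ^ (2 ^ k)).trace).re := by
              have := hL (A * B)
              rwa [← Matrix.conjTranspose_pow] at this
          _ = (((A * A * (B * B)) ^ (2 ^ k)).trace).re := by
              have e : (A * B)ᴴ * (A * B) = B * (A * A * B) := by
                rw [Matrix.conjTranspose_mul, hA.isHermitian.eq, hB.isHermitian.eq]
                noncomm_ring
              rw [e, trace_mul_pow_comm B (A * A * B) hq]
              congr 2
              noncomm_ring
          _ ≤ (((A * A) ^ (2 ^ k) * (B * B) ^ (2 ^ k)).trace).re := by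
              have hA2 : (A * A).PosSemidef := by
                have := hA.posSemidef.pow 2
                rwa [pow_two] at this
              have hB2 : (B * B).PosSemidef := by
                have := hB.posSemidef.pow 2
                rwa [pow_two] at this
              exact hT (A * A) (B * B) hA2 hB2
          _ = ((A ^ (2 * 2 ^ k) * B ^ (2 * 2 ^ k)).trace).re := by
              rw [← pow_two A, ← pow_two B, ← pow_mul, ← pow_mul]
      · -- the auxiliary inequality at level k+1
        intro N
        rw [hpow2]
        have hW : (Nᴴ * N).PosSemidef := Matrix.posSemidef_conjTranspose_mul_self N
        have hV : (N * Nᴴ).PosSemidef := Matrix.posSemidef_self_mul_conjTranspose N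
        have hWq : ((Nᴴ * N) ^ (2 ^ k)).IsHermitian := hW.1.pow _
        have hVq : ((N * Nᴴ) ^ (2 ^ k)).IsHermitian := hV.1.pow _
        have htrVW : (((N * Nᴴ) ^ (2 * 2 ^ k)).trace) = (((Nᴴ * N) ^ (2 * 2 ^ k)).trace) :=
          trace_mul_pow_comm N (Nᴴ) (by positivity)
        have hWnonneg : 0 ≤ (((Nᴴ * N) ^ (2 ^ k) * (Nᴴ * N) ^ (2 ^ k)).trace).re :=
          trace_herm_sq_nonneg _ hWq
        calc (((Nᴴ) ^ (2 * 2 ^ k) * N ^ (2 * 2 ^ k)).trace).re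
            = ((((N ^ 2)ᴴ) ^ (2 ^ k) * (N ^ 2) ^ (2 ^ k)).trace).re := by
              rw [pow_mul, pow_mul, ← Matrix.conjTranspose_pow]
          _ ≤ ((((N ^ 2)ᴴ * N ^ 2) ^ (2 ^ k)).trace).re := hL (N ^ 2)
          _ = ((((Nᴴ * N) * (N * Nᴴ)) ^ (2 ^ k)).trace).re := by
              have e : (N ^ 2)ᴴ * N ^ 2 = Nᴴ * (Nᴴ * N * N) := by
                rw [Matrix.conjTranspose_pow]
                noncomm_ring
              rw [e, trace_mul_pow_comm (Nᴴ) (Nᴴ * N * N) hq]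
              congr 2
              noncomm_ring
          _ ≤ (((Nᴴ * N) ^ (2 ^ k) * (N * Nᴴ) ^ (2 ^ k)).trace).re := hT _ _ hW hV
          _ ≤ Real.sqrt (((((Nᴴ * N) ^ (2 ^ k)) * ((Nᴴ * N) ^ (2 ^ k))).trace).re)
                * Real.sqrt (((((N * Nᴴ) ^ (2 ^ k)) * ((N * Nᴴ) ^ (2 ^ k))).trace).re) :=
              cs_herm _ _ hWq hVq
          _ = (((Nᴴ * N) ^ (2 * 2 ^ k)).trace).re := by
              have e1 : ∀ X : M, X ^ (2 ^ k) * X ^ (2 ^ k) = X ^ (2 * 2 ^ k) := fun X => by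
                rw [← pow_add, two_mul]
              rw [e1, e1, htrVW, Real.mul_self_sqrt]
              rw [← e1]
              exact hWnonneg
  

section Analysis

variable [Nonempty (Fin D)]

attribute [local instance] Matrix.linftyOpNormedRing Matrix.linftyOpNormedAlgebra

noncomputable def phi (s : ℝ) : ℝ :=
  1 + s * Real.exp s + Real.exp s * Real.exp s + 2 * Real.exp s

lemma norm_exp_le (Z : M) : ‖exp Z‖ ≤ Real.exp ‖Z‖ := by
  rw [exp_eq_tsum ℂ]
  refine (norm_tsum_le_tsum_norm (norm_expSeries_summable' Z)).trans ?_
  have h : ∀ n : ℕ, ‖(Nat.factorial n : ℂ)⁻¹ • Z ^ n‖ ≤ ‖Z‖ ^ n / Nat.factorial n := by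
    intro n
    rw [norm_smul, div_eq_inv_mul]
    have e1 : ‖(Nat.factorial n : ℂ)⁻¹‖ = (Nat.factorial n : ℝ)⁻¹ := by simp
    rw [e1]
    gcongr
    exact norm_pow_le Z n
  refine (Summable.tsum_le_tsum h (norm_expSeries_summable' Z)
    (Real.summable_pow_div_factorial ‖Z‖)).trans ?_
  exact le_of_eq (by rw [Real.exp_eq_exp_ℝ, exp_eq_tsum_div])

lemma norm_exp_sub_one_sub_le (Z : M) :
    ‖exp Z - 1 - Z‖ ≤ ‖Z‖ ^ 2 * Real.exp ‖Z‖ := by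
  have hsum := expSeries_summable' (𝕂 := ℂ) Z
  have hnorm := norm_expSeries_summable' (𝕂 := ℂ) Z
  have hsum1 := (summable_nat_add_iff (f := fun n : ℕ => (Nat.factorial n : ℂ)⁻¹ • Z ^ n) 1).mpr hsum
  have he : exp Z - 1 - Z = ∑' n : ℕ, (Nat.factorial (n+1+1) : ℂ)⁻¹ • Z ^ (n + 1 + 1) := by
    rw [exp_eq_tsum ℂ]
    beta_reduce
    erw [Summable.tsum_eq_zero_add hsum, Summable.tsum_eq_zero_add hsum1]
    simp only [Nat.factorial_zero, Nat.cast_one, inv_one, pow_zero, one_smul, zero_add,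
      Nat.factorial_one, pow_one]
    abel
  rw [he]
  have hsum2 := (summable_nat_add_iff
    (f := fun n : ℕ => ‖(Nat.factorial n : ℂ)⁻¹ • Z ^ n‖) 2).mpr hnorm
  have hsum2' : Summable fun n : ℕ => ‖(Nat.factorial (n+1+1) : ℂ)⁻¹ • Z ^ (n + 1 + 1)‖ := hsum2
  refine (norm_tsum_le_tsum_norm hsum2').trans ?_
  have hb : ∀ n : ℕ, ‖(Nat.factorial (n+1+1) : ℂ)⁻¹ • Z ^ (n + 1 + 1)‖
      ≤ ‖Z‖ ^ 2 * (‖Z‖ ^ n / Nat.factorial n) := by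
    intro n
    rw [norm_smul]
    have e1 : ‖(Nat.factorial (n+1+1) : ℂ)⁻¹‖ = (Nat.factorial (n+1+1) : ℝ)⁻¹ := by simp
    rw [e1]
    have e2 : ‖Z ^ (n + 1 + 1)‖ ≤ ‖Z‖ ^ (n + 1 + 1) := norm_pow_le Z (n + 1 + 1)
    have e3 : (Nat.factorial (n+1+1) : ℝ)⁻¹ ≤ (Nat.factorial n : ℝ)⁻¹ := by
      have h1 : (0:ℝ) < (Nat.factorial n : ℝ) := by exact_mod_cast Nat.factorial_pos n
      have h2 : (Nat.factorial n : ℝ) ≤ (Nat.factorial (n+1+1) : ℝ) := by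
        exact_mod_cast Nat.factorial_le (by omega)
      exact inv_anti₀ h1 h2
    calc (Nat.factorial (n+1+1) : ℝ)⁻¹ * ‖Z ^ (n + 1 + 1)‖
        ≤ (Nat.factorial n : ℝ)⁻¹ * ‖Z‖ ^ (n + 1 + 1) :=
          mul_le_mul e3 e2 (norm_nonneg _) (by positivity)
      _ = ‖Z‖ ^ 2 * (‖Z‖ ^ n / Nat.factorial n) := by
          have h1 : (0:ℝ) < (Nat.factorial n : ℝ) := by exact_mod_cast Nat.factorial_pos n
          field_simp
          ring
  refine (Summable.tsum_le_tsum hb hsum2' ((Real.summable_pow_div_factorial ‖Z‖).mul_left _)).trans ?_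
  rw [tsum_mul_left]
  exact mul_le_mul_of_nonneg_left
    (le_of_eq (by rw [Real.exp_eq_exp_ℝ, exp_eq_tsum_div])) (sq_nonneg _)

lemma pow_sub_pow_norm_le (T S : M) {Mb : ℝ} (hT : ‖T‖ ≤ Mb) (hS : ‖S‖ ≤ Mb) (m : ℕ) :
    ‖T ^ (m + 1) - S ^ (m + 1)‖ ≤ ((m : ℝ) + 1) * Mb ^ m * ‖T - S‖ := by
  have hMb : 0 ≤ Mb := (norm_nonneg _).trans hT
  induction m with
  | zero => simp
  | succ m ih =>
      have key : T ^ (m + 1 + 1) - S ^ (m + 1 + 1)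
          = T ^ (m + 1) * (T - S) + (T ^ (m + 1) - S ^ (m + 1)) * S := by noncomm_ring
      have hTn : ‖T ^ (m + 1)‖ ≤ Mb ^ (m + 1) :=
        (norm_pow_le T (m + 1)).trans (pow_le_pow_left₀ (norm_nonneg _) hT _)
      have h1 : ‖T ^ (m + 1) * (T - S)‖ ≤ Mb ^ (m + 1) * ‖T - S‖ :=
        (norm_mul_le _ _).trans (mul_le_mul_of_nonneg_right hTn (norm_nonneg _))
      have h2 : ‖(T ^ (m + 1) - S ^ (m + 1)) * S‖
          ≤ (((m : ℝ) + 1) * Mb ^ m * ‖T - S‖) * Mb :=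
        (norm_mul_le _ _).trans (mul_le_mul ih hS (norm_nonneg _) (by positivity))
      calc ‖T ^ (m + 1 + 1) - S ^ (m + 1 + 1)‖
          ≤ ‖T ^ (m + 1) * (T - S)‖ + ‖(T ^ (m + 1) - S ^ (m + 1)) * S‖ := by
            rw [key]; exact norm_add_le _ _
        _ ≤ Mb ^ (m + 1) * ‖T - S‖ + (((m : ℝ) + 1) * Mb ^ m * ‖T - S‖) * Mb :=
            add_le_add h1 h2
        _ = (((m + 1 : ℕ) : ℝ) + 1) * Mb ^ (m + 1) * ‖T - S‖ := by push_cast; ring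

lemma exp_mul_exp_sub_exp_add (u v : M) {s : ℝ} (huv : ‖u‖ + ‖v‖ ≤ s) :
    ‖exp u * exp v - exp (u + v)‖ ≤ (‖u‖ + ‖v‖) ^ 2 * phi s := by
  have hu0 : (0:ℝ) ≤ ‖u‖ := norm_nonneg _
  have hv0 : (0:ℝ) ≤ ‖v‖ := norm_nonneg _
  have hs0 : (0:ℝ) ≤ s := by linarith
  have hus : ‖u‖ ≤ s := by linarith
  have hvs : ‖v‖ ≤ s := by linarith
  have heu : Real.exp ‖u‖ ≤ Real.exp s := Real.exp_le_exp.mpr hus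
  have hev : Real.exp ‖v‖ ≤ Real.exp s := Real.exp_le_exp.mpr hvs
  have hp2 : ‖u‖ ^ 2 ≤ (‖u‖ + ‖v‖) ^ 2 := by nlinarith
  have hq2 : ‖v‖ ^ 2 ≤ (‖u‖ + ‖v‖) ^ 2 := by nlinarith
  have e1 : ‖u‖ * ‖v‖ ≤ (‖u‖ + ‖v‖) ^ 2 := by nlinarith
  have h : exp u * exp v - exp (u + v)
      = (exp v - 1 - v) + u * v + u * (exp v - 1 - v) + (exp u - 1 - u) * exp v
        - (exp (u + v) - 1 - (u + v)) := by noncomm_ring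
  have b0 : ‖exp v - 1 - v‖ ≤ (‖u‖ + ‖v‖) ^ 2 * Real.exp s :=
    (norm_exp_sub_one_sub_le v).trans
      (mul_le_mul hq2 hev (Real.exp_pos _).le (by positivity))
  have b1 : ‖u * v‖ ≤ (‖u‖ + ‖v‖) ^ 2 * 1 := by
    refine (norm_mul_le _ _).trans ?_
    rw [mul_one]; exact e1
  have b2 : ‖u * (exp v - 1 - v)‖ ≤ (‖u‖ + ‖v‖) ^ 2 * (s * Real.exp s) := by
    refine (norm_mul_le _ _).trans ?_
    have h2 : ‖u‖ * ‖v‖ ^ 2 ≤ (‖u‖ + ‖v‖) ^ 2 * s := by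
      calc ‖u‖ * ‖v‖ ^ 2 = (‖u‖ * ‖v‖) * ‖v‖ := by ring
        _ ≤ (‖u‖ + ‖v‖) ^ 2 * s := mul_le_mul e1 hvs hv0 (by positivity)
    calc ‖u‖ * ‖exp v - 1 - v‖
        ≤ ‖u‖ * (‖v‖ ^ 2 * Real.exp ‖v‖) :=
          mul_le_mul_of_nonneg_left (norm_exp_sub_one_sub_le v) hu0
      _ = (‖u‖ * ‖v‖ ^ 2) * Real.exp ‖v‖ := by ring
      _ ≤ ((‖u‖ + ‖v‖) ^ 2 * s) * Real.exp s :=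
          mul_le_mul h2 hev (Real.exp_pos _).le (by positivity)
      _ = (‖u‖ + ‖v‖) ^ 2 * (s * Real.exp s) := by ring
  have b3 : ‖(exp u - 1 - u) * exp v‖
      ≤ (‖u‖ + ‖v‖) ^ 2 * (Real.exp s * Real.exp s) := by
    refine (norm_mul_le _ _).trans ?_
    calc ‖exp u - 1 - u‖ * ‖exp v‖
        ≤ (‖u‖ ^ 2 * Real.exp ‖u‖) * Real.exp ‖v‖ :=
          mul_le_mul (norm_exp_sub_one_sub_le u) (norm_exp_le v) (norm_nonneg _) (by positivity)
      _ = ‖u‖ ^ 2 * (Real.exp ‖u‖ * Real.exp ‖v‖) := by ring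
      _ ≤ (‖u‖ + ‖v‖) ^ 2 * (Real.exp s * Real.exp s) :=
          mul_le_mul hp2 (mul_le_mul heu hev (Real.exp_pos _).le (Real.exp_pos _).le)
            (by positivity) (by positivity)
  have b4 : ‖exp (u + v) - 1 - (u + v)‖ ≤ (‖u‖ + ‖v‖) ^ 2 * Real.exp s := by
    refine (norm_exp_sub_one_sub_le (u + v)).trans ?_
    have h2 : ‖u + v‖ ^ 2 ≤ (‖u‖ + ‖v‖) ^ 2 := by
      have := norm_add_le u v
      nlinarith [norm_nonneg (u + v)]
    have h3 : Real.exp ‖u + v‖ ≤ Real.exp s :=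
      Real.exp_le_exp.mpr ((norm_add_le u v).trans huv)
    exact mul_le_mul h2 h3 (Real.exp_pos _).le (by positivity)
  calc ‖exp u * exp v - exp (u + v)‖
      ≤ ‖(exp v - 1 - v) + u * v + u * (exp v - 1 - v) + (exp u - 1 - u) * exp v‖
          + ‖exp (u + v) - 1 - (u + v)‖ := by rw [h]; exact norm_sub_le _ _
    _ ≤ (‖(exp v - 1 - v) + u * v + u * (exp v - 1 - v)‖
          + ‖(exp u - 1 - u) * exp v‖) + ‖exp (u + v) - 1 - (u + v)‖ :=
        add_le_add_left (norm_add_le _ _) _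
    _ ≤ ((‖exp v - 1 - v‖ + ‖u * v‖ + ‖u * (exp v - 1 - v)‖)
          + ‖(exp u - 1 - u) * exp v‖) + ‖exp (u + v) - 1 - (u + v)‖ := by
        exact add_le_add_left (add_le_add_left norm_add₃_le _) _
    _ ≤ (((‖u‖ + ‖v‖) ^ 2 * Real.exp s + (‖u‖ + ‖v‖) ^ 2 * 1
          + (‖u‖ + ‖v‖) ^ 2 * (s * Real.exp s))
          + (‖u‖ + ‖v‖) ^ 2 * (Real.exp s * Real.exp s))
          + (‖u‖ + ‖v‖) ^ 2 * Real.exp s :=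
        add_le_add (add_le_add (add_le_add (add_le_add b0 b1) b2) b3) b4
    _ = (‖u‖ + ‖v‖) ^ 2 * phi s := by unfold phi; ring

lemma trotter_bound (X Y : M) (n : ℕ) (hn : 1 ≤ n) :
    ‖(exp (((n : ℕ) : ℝ)⁻¹ • X) * exp (((n : ℕ) : ℝ)⁻¹ • Y)) ^ n - exp (X + Y)‖
      ≤ Real.exp (‖X‖ + ‖Y‖) * ((‖X‖ + ‖Y‖) ^ 2 * phi (‖X‖ + ‖Y‖)) / n := by
  have hs0 : (0:ℝ) ≤ ‖X‖ + ‖Y‖ := by positivity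
  have hnR : (1:ℝ) ≤ (n:ℝ) := by exact_mod_cast hn
  have hnpos : (0:ℝ) < (n:ℝ) := by linarith
  set s : ℝ := ‖X‖ + ‖Y‖ with hsdef
  set u : M := ((n : ℕ) : ℝ)⁻¹ • X with hudef
  set v : M := ((n : ℕ) : ℝ)⁻¹ • Y with hvdef
  have hun : ‖u‖ = ((n:ℝ))⁻¹ * ‖X‖ := by
    rw [hudef, norm_smul, Real.norm_eq_abs, abs_of_pos (by positivity)]
  have hvn : ‖v‖ = ((n:ℝ))⁻¹ * ‖Y‖ := by
    rw [hvdef, norm_smul, Real.norm_eq_abs, abs_of_pos (by positivity)]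
  have huv_eq : ‖u‖ + ‖v‖ = ((n:ℝ))⁻¹ * s := by rw [hun, hvn, hsdef]; ring
  have hinv1 : ((n:ℝ))⁻¹ ≤ 1 := by
    rw [inv_le_one_iff₀]
    right; exact hnR
  have husv_s : ‖u‖ + ‖v‖ ≤ s := by
    rw [huv_eq]
    nlinarith
  have hw : u + v = ((n : ℕ) : ℝ)⁻¹ • (X + Y) := by rw [hudef, hvdef, smul_add]
  have hSn : (exp (u + v)) ^ n = exp (X + Y) := by
    rw [← Matrix.exp_nsmul]
    congr 1
    rw [hw, ← Nat.cast_smul_eq_nsmul ℝ, smul_smul, mul_inv_cancel₀ hnpos.ne', one_smul]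
  have hTle : ‖exp u * exp v‖ ≤ Real.exp (((n:ℝ))⁻¹ * s) := by
    refine (norm_mul_le _ _).trans ?_
    calc ‖exp u‖ * ‖exp v‖
        ≤ Real.exp ‖u‖ * Real.exp ‖v‖ :=
          mul_le_mul (norm_exp_le u) (norm_exp_le v) (norm_nonneg _) (Real.exp_pos _).le
      _ = Real.exp (‖u‖ + ‖v‖) := (Real.exp_add _ _).symm
      _ ≤ Real.exp (((n:ℝ))⁻¹ * s) := Real.exp_le_exp.mpr (le_of_eq huv_eq)
  have hSle : ‖exp (u + v)‖ ≤ Real.exp (((n:ℝ))⁻¹ * s) :=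
    (norm_exp_le _).trans (Real.exp_le_exp.mpr
      (((norm_add_le u v).trans (le_of_eq huv_eq))))
  have hdiff : ‖exp u * exp v - exp (u + v)‖ ≤ (((n:ℝ))⁻¹ * s) ^ 2 * phi s := by
    refine (exp_mul_exp_sub_exp_add u v husv_s).trans ?_
    rw [huv_eq]
  have hphi0 : 0 ≤ phi s := by unfold phi; positivity
  obtain ⟨m, rfl⟩ : ∃ m, n = m + 1 := ⟨n - 1, by omega⟩
  have htel := pow_sub_pow_norm_le (exp u * exp v) (exp (u + v)) hTle hSle m
  have hMbm : Real.exp ((((m+1:ℕ):ℝ))⁻¹ * s) ^ m ≤ Real.exp s := by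
    rw [← Real.exp_nat_mul]
    refine Real.exp_le_exp.mpr ?_
    have hmn : (m:ℝ) ≤ ((m+1:ℕ):ℝ) := by push_cast; linarith
    have h1 : (m:ℝ) * (((m+1:ℕ):ℝ))⁻¹ ≤ 1 := by
      rw [← div_eq_mul_inv, div_le_one hnpos]
      exact hmn
    calc (m:ℝ) * ((((m+1:ℕ):ℝ))⁻¹ * s) = ((m:ℝ) * (((m+1:ℕ):ℝ))⁻¹) * s := by ring
      _ ≤ 1 * s := mul_le_mul_of_nonneg_right h1 hs0
      _ = s := one_mul s
  rw [← hSn]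
  refine htel.trans ?_
  have h1 : ((m:ℝ) + 1) * Real.exp ((((m+1:ℕ):ℝ))⁻¹ * s) ^ m ≤ ((m:ℝ) + 1) * Real.exp s :=
    mul_le_mul_of_nonneg_left hMbm (by positivity)
  have h2 := mul_le_mul h1 hdiff (norm_nonneg _) (by positivity)
  refine h2.trans (le_of_eq ?_)
  have hne : ((m+1:ℕ):ℝ) ≠ 0 := hnpos.ne'
  push_cast
  push_cast at hne
  field_simp

lemma trotter_tendsto (X Y : M) :
    Tendsto (fun k : ℕ =>
        (exp (((2 ^ k : ℕ) : ℝ)⁻¹ • X) * exp (((2 ^ k : ℕ) : ℝ)⁻¹ • Y)) ^ (2 ^ k))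
      atTop (𝓝 (exp (X + Y))) := by
  rw [← tendsto_sub_nhds_zero_iff]
  refine squeeze_zero_norm
    (fun k => trotter_bound X Y (2 ^ k) Nat.one_le_two_pow) ?_
  refine Filter.Tendsto.const_div_atTop ?_ _
  have h1 : Tendsto (fun k : ℕ => (2:ℝ) ^ k) atTop atTop :=
    tendsto_pow_atTop_atTop_of_one_lt (by norm_num)
  refine h1.congr fun k => ?_
  push_cast
  ring


end Analysis

lemma matExp_eq_exp {A : Matrix (Fin D) (Fin D) ℂ} (hA : A.IsHermitian) :
    matExp A = NormedSpace.exp A := by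
  classical
  set U : M := (hA.eigenvectorUnitary : M) with hUdef
  have hU1 : U * star U = 1 := (Matrix.mem_unitaryGroup_iff).mp hA.eigenvectorUnitary.2
  have hU2 : star U * U = 1 := (Matrix.mem_unitaryGroup_iff').mp hA.eigenvectorUnitary.2
  have hUnit : IsUnit U := ⟨⟨U, star U, hU1, hU2⟩, rfl⟩
  have hUinv : U⁻¹ = star U := Matrix.inv_eq_left_inv hU2
  have h1 : NormedSpace.exp (U * Matrix.diagonal (RCLike.ofReal ∘ hA.eigenvalues) * star U)
      = U * NormedSpace.exp (Matrix.diagonal (RCLike.ofReal ∘ hA.eigenvalues)) * star U := by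
    rw [← hUinv]
    exact Matrix.exp_conj U _ hUnit
  calc matExp A
      = U * Matrix.diagonal (fun i => (Real.exp (hA.eigenvalues i) : ℂ)) * star U := by
        unfold matExp matFun
        rw [dif_pos hA]
    _ = NormedSpace.exp A := by
        conv_rhs => rw [hA.spectral_theorem, Unitary.conjStarAlgAut_apply]
        rw [h1, Matrix.exp_diagonal]
        have hfun : (NormedSpace.exp (RCLike.ofReal ∘ hA.eigenvalues) : Fin D → ℂ)
            = fun i => (Real.exp (hA.eigenvalues i) : ℂ) := by
          funext i
          rw [Pi.exp_def, ← Complex.exp_eq_exp_ℂ]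
          exact (Complex.ofReal_exp _).symm
        rw [hfun]

lemma matExp_posSemidef {A : Matrix (Fin D) (Fin D) ℂ} (hA : A.IsHermitian) :
    (matExp A).PosSemidef := by
  unfold matExp matFun
  rw [dif_pos hA]
  have hdiag : (Matrix.diagonal (fun i => (Real.exp (hA.eigenvalues i) : ℂ))).PosSemidef :=
    Matrix.posSemidef_diagonal_iff.mpr fun i => Complex.zero_le_real.mpr (Real.exp_pos _).le
  have := hdiag.mul_mul_conjTranspose_same (hA.eigenvectorUnitary : M)
  rwa [Matrix.star_eq_conjTranspose]

end GTaux

theorem golden_thompson (D : ℕ) (H K : Matrix (Fin D) (Fin D) ℂ)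
    (hH : H.IsHermitian) (hK : K.IsHermitian) :
    ((matExp (H + K)).trace).re ≤ ((matExp H * matExp K).trace).re := by
  classical
  by_cases hD : D = 0
  · subst hD
    simp [Matrix.trace]
  · haveI : Nonempty (Fin D) := ⟨⟨0, Nat.pos_of_ne_zero hD⟩⟩
    have hHK : (H + K).IsHermitian := hH.add hK
    rw [GTaux.matExp_eq_exp hHK, GTaux.matExp_eq_exp hH, GTaux.matExp_eq_exp hK]
    set c : ℕ → ℝ := fun k => ((2 ^ k : ℕ) : ℝ)⁻¹ with hc
    have hherm : ∀ (k : ℕ) (A : Matrix (Fin D) (Fin D) ℂ), A.IsHermitian →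
        ((c k : ℝ) • A).IsHermitian := by
      intro k A hA
      show ((c k : ℝ) • A)ᴴ = (c k : ℝ) • A
      rw [Matrix.conjTranspose_smul, star_trivial, hA.eq]
    have hpowexp : ∀ (k : ℕ) (A : Matrix (Fin D) (Fin D) ℂ),
        (NormedSpace.exp ((c k : ℝ) • A)) ^ (2 ^ k) = NormedSpace.exp A := by
      intro k A
      rw [← Matrix.exp_nsmul]
      congr 1
      rw [hc, ← Nat.cast_smul_eq_nsmul ℝ, smul_smul, mul_inv_cancel₀, one_smul]
      positivity
    have hbound : ∀ k : ℕ,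
        (((NormedSpace.exp ((c k : ℝ) • H) * NormedSpace.exp ((c k : ℝ) • K)) ^ (2 ^ k)).trace).re
          ≤ ((NormedSpace.exp H * NormedSpace.exp K).trace).re := by
      intro k
      have hApsd : (NormedSpace.exp ((c k : ℝ) • H)).PosSemidef := by
        rw [← GTaux.matExp_eq_exp (hherm k H hH)]
        exact GTaux.matExp_posSemidef (hherm k H hH)
      have hBpsd : (NormedSpace.exp ((c k : ℝ) • K)).PosSemidef := by
        rw [← GTaux.matExp_eq_exp (hherm k K hK)]
        exact GTaux.matExp_posSemidef (hherm k K hK)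
      have h := (GTaux.key (D := D) k).1 _ _ hApsd hBpsd
      rwa [hpowexp k H, hpowexp k K] at h
    have h2 : Continuous fun A : Matrix (Fin D) (Fin D) ℂ => (A.trace).re :=
      Complex.continuous_re.comp (Continuous.matrix_trace continuous_id)
    have htend := (h2.tendsto _).comp (GTaux.trotter_tendsto H K)
    exact le_of_tendsto htend (Filter.Eventually.of_forall hbound)
end

section
/- One-step regret bound for Q-Soft-Bayes: let η ∈ (0,1), let W_t be Hermitian positive definite with tr(W_t) ≤ 1, ρ_t = W_t/tr(W_t), let A_t be Hermitian positive semi-definite with tr(A_t ρ_t) > 0, and set W_{t+1} = exp(log W_t + log((1-η)I + η A_t/tr(A_t ρ_t))). Then for every density matrix ρ with tr(A_t ρ) > 0, (−log tr(A_t ρ_t)) − (−log tr(A_t ρ)) ≤ (1/η)·tr(ρ(log W_{t+1} − log W_t)) + tr(log W_{t+1} − log W_t) + D·η/(1-η). -/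
open Matrix BigOperators
open scoped ComplexOrder

-- continuity of arbitrary functions on finite sets
lemma contOn_finite (f : ℝ → ℝ) {s : Set ℝ} (hs : s.Finite) : ContinuousOn f s := by
  have := hs.to_subtype
  rw [continuousOn_iff_continuous_restrict]
  exact continuous_of_discreteTopology

lemma contOn_spectrum {D : ℕ} (f : ℝ → ℝ) (A : Matrix (Fin D) (Fin D) ℂ) :
    ContinuousOn f (spectrum ℝ A) :=
  contOn_finite f A.finite_real_spectrum

lemma contOn_image {D : ℕ} (f g : ℝ → ℝ) (A : Matrix (Fin D) (Fin D) ℂ) :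
    ContinuousOn f (g '' spectrum ℝ A) :=
  contOn_finite f (Set.Finite.image g A.finite_real_spectrum)

lemma matFun_eq_cfc {D : ℕ} (f : ℝ → ℝ) {A : Matrix (Fin D) (Fin D) ℂ}
    (hA : A.IsHermitian) : matFun f A = cfc f A := by
  rw [matFun, dif_pos hA, hA.cfc_eq]
  rfl

lemma matFun_isHermitian {D : ℕ} (f : ℝ → ℝ) {A : Matrix (Fin D) (Fin D) ℂ}
    (hA : A.IsHermitian) : (matFun f A).IsHermitian := by
  rw [matFun_eq_cfc f hA]
  exact cfc_predicate f A

-- matLog of matExp of a Hermitian matrix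
lemma matLog_matExp {D : ℕ} {K : Matrix (Fin D) (Fin D) ℂ} (hK : K.IsHermitian) :
    matLog (matExp K) = K := by
  have hE : (matExp K).IsHermitian := matFun_isHermitian _ hK
  rw [matLog, matFun_eq_cfc _ hE, matExp, matFun_eq_cfc _ hK]
  have h2 := cfc_comp Real.log Real.exp K hK (contOn_image _ _ _) (contOn_spectrum _ _)
  have h3 : Real.log ∘ Real.exp = id := funext Real.log_exp
  rw [← h2, h3]
  exact cfc_id ℝ K hK

open Finset in
lemma log_one_sub_ge {η : ℝ} (hη1 : η < 1) :
    -(η / (1 - η)) ≤ Real.log (1 - η) := by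
  have h1 : (0:ℝ) < 1 - η := by linarith
  have h := Real.one_sub_inv_le_log_of_pos h1
  have e : 1 - (1-η)⁻¹ = -(η/(1-η)) := by field_simp; ring
  linarith [e ▸ h]

lemma key2 {η p B : ℝ} (hη0 : 0 < η) (hη1 : η < 1) (hp0 : 0 < p) (hp1 : p ≤ 1)
    (hB : 0 < B) :
    η * Real.log B ≤ (p + η) * Real.log (1 - η + η * B / p)
      + (1 - p) * Real.log (1 - η) + η^2/(1-η) := by
  have h1 : (0:ℝ) < 1 - η := by linarith
  set L := Real.log (1 - η) with hL
  set z := B / (1 - η) with hzdef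
  have hz : 0 < z := div_pos hB h1
  have hpη : 0 < p + η := by linarith
  have hfact : 1 - η + η * B / p = ((p + η*z)/(p+η)) * ((1-η)*(p+η)/p) := by
    rw [hzdef]
    field_simp
  have hw : p/(p+η) + η/(p+η) = 1 := by field_simp
  have amgm : (1:ℝ) ^ (p/(p+η)) * z ^ (η/(p+η)) ≤ p/(p+η) * 1 + η/(p+η) * z :=
    Real.geom_mean_le_arith_mean2_weighted (by positivity) (by positivity)
      (by norm_num) hz.le hw
  have amgm' : z ^ (η/(p+η)) ≤ (p + η*z)/(p+η) := by
    rw [Real.one_rpow, one_mul] at amgm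
    have e : p/(p+η) * 1 + η/(p+η) * z = (p + η*z)/(p+η) := by field_simp
    linarith [amgm, e ▸ amgm]
  have hrp : (0:ℝ) < z ^ (η/(p+η)) := Real.rpow_pos_of_pos hz _
  have hlog1 : (η/(p+η)) * Real.log z ≤ Real.log ((p + η*z)/(p+η)) := by
    rw [← Real.log_rpow hz]
    exact Real.log_le_log hrp amgm'
  have hlog1' : η * Real.log z ≤ (p+η) * Real.log ((p + η*z)/(p+η)) := by
    have h2 := mul_le_mul_of_nonneg_left hlog1 hpη.le
    have e : (p+η) * ((η/(p+η)) * Real.log z) = η * Real.log z := by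
      field_simp
    linarith [e ▸ h2]
  have hlog2 : η/(p+η) ≤ Real.log ((p+η)/p) := by
    have hx : (0:ℝ) < (p+η)/p := by positivity
    have h := Real.one_sub_inv_le_log_of_pos hx
    have e : 1 - ((p+η)/p)⁻¹ = η/(p+η) := by
      rw [inv_div]
      field_simp
      ring
    linarith [e ▸ h]
  have hlog2' : η ≤ (p+η) * Real.log ((p+η)/p) := by
    have h2 := mul_le_mul_of_nonneg_left hlog2 hpη.le
    have e : (p+η) * (η/(p+η)) = η := by field_simp
    linarith [e ▸ h2]
  have hpos1 : (0:ℝ) < (p + η*z)/(p+η) := by positivity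
  have hpos2 : (0:ℝ) < (1-η)*(p+η)/p := by positivity
  have hlogX : Real.log (1 - η + η * B / p)
      = Real.log ((p + η*z)/(p+η)) + (L + Real.log ((p+η)/p)) := by
    rw [hfact, Real.log_mul hpos1.ne' hpos2.ne']
    congr 1
    rw [mul_div_assoc, Real.log_mul h1.ne' (by positivity)]
  have hlogz' : η * Real.log z = η * Real.log B - η * L :=
    by rw [hzdef, Real.log_div hB.ne' h1.ne']; ring
  have hLlb : -(η/(1-η)) ≤ L := log_one_sub_ge hη1
  have expand : (p+η) * Real.log (1 - η + η * B / p)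
      = (p+η) * Real.log ((p + η*z)/(p+η)) + (p+η)*L + (p+η)*Real.log ((p+η)/p) := by
    rw [hlogX]; ring
  have e2 : η + η^2/(1-η) = η/(1-η) := by field_simp; ring
  linarith [hlog1', hlog2', expand, hlogz']

open Finset in
lemma scalar_core (D : ℕ) {η : ℝ} (hη0 : 0 < η) (hη1 : η < 1)
    (p t : Fin D → ℝ) (hp : ∀ i, 0 ≤ p i) (hps : ∑ i, p i = 1)
    (ht : ∀ i, 0 ≤ t i) (hB : 0 < ∑ i, p i * t i) :
    Real.log (∑ i, p i * t i) ≤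
      ∑ i, (p i / η + 1) * Real.log (1 - η + η * t i) + D * η / (1 - η) := by
  have h1 : (0:ℝ) < 1 - η := by linarith
  set L := Real.log (1 - η) with hL
  set B := ∑ i, p i * t i with hBdef
  set q : Fin D → ℝ := fun i => p i * t i / B with hq
  have hqs : ∑ i, q i = 1 := by
    rw [hq, ← Finset.sum_div]
    exact div_self hB.ne'
  have hq0 : ∀ i, 0 ≤ q i := fun i => div_nonneg (mul_nonneg (hp i) (ht i)) hB.le
  have hp1 : ∀ i, p i ≤ 1 := by
    intro i
    rw [← hps]
    exact Finset.single_le_sum (fun j _ => hp j) (Finset.mem_univ i)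
  have per : ∀ i, η * q i * Real.log B - q i * (η^2/(1-η))
      + ((1 - q i)*(p i + η) - q i * (1 - p i)) * L ≤ (p i + η) * Real.log (1 - η + η * t i) := by
    intro i
    have hpηi : (0:ℝ) < p i + η := by linarith [hp i]
    have hlogs : L ≤ Real.log (1 - η + η * t i) := by
      apply Real.log_le_log h1
      have := mul_nonneg hη0.le (ht i)
      linarith
    rcases eq_or_lt_of_le (hq0 i) with hqi | hqi
    · rw [← hqi]
      have := mul_le_mul_of_nonneg_left hlogs hpηi.le
      simpa using this
    · have hpi : 0 < p i := by
        by_contra hcon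
        push_neg at hcon
        have hpe : p i = 0 := le_antisymm hcon (hp i)
        have : q i = 0 := by simp [hq, hpe]
        linarith
      have hti : t i = q i * B / p i := by
        rw [hq]; field_simp
      have hXpos : 0 < 1 - η + η * B / p i := by positivity
      have hqil1 : q i ≤ 1 := by
        rw [← hqs]
        exact Finset.single_le_sum (fun j _ => hq0 j) (Finset.mem_univ i)
      have amgm : (1 - η + η * B / p i) ^ (q i) * (1-η) ^ (1 - q i)
          ≤ q i * (1 - η + η * B / p i) + (1 - q i) * (1-η) :=
        Real.geom_mean_le_arith_mean2_weighted hqi.le (by linarith)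
          hXpos.le h1.le (by ring)
      have hcomb : q i * (1 - η + η * B / p i) + (1 - q i) * (1-η) = 1 - η + η * t i := by
        rw [hti]; field_simp; ring
      have hconc : q i * Real.log (1 - η + η * B / p i) + (1 - q i) * L
          ≤ Real.log (1 - η + η * t i) := by
        have hgm : (0:ℝ) < (1 - η + η * B / p i) ^ (q i) * (1-η) ^ (1 - q i) := by positivity
        have hlog := Real.log_le_log hgm (hcomb ▸ amgm)
        rw [Real.log_mul (by positivity) (by positivity),
          Real.log_rpow hXpos, Real.log_rpow h1] at hlog
        exact hlog
      have hk2 := key2 hη0 hη1 hpi (hp1 i) hB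
      have step1 : (p i + η) * (q i * Real.log (1 - η + η * B / p i) + (1 - q i) * L)
          ≤ (p i + η) * Real.log (1 - η + η * t i) :=
        mul_le_mul_of_nonneg_left hconc hpηi.le
      have step2 : q i * (η * Real.log B)
          ≤ q i * ((p i + η) * Real.log (1 - η + η * B / p i)
            + (1 - p i) * L + η^2/(1-η)) :=
        mul_le_mul_of_nonneg_left hk2 hqi.le
      nlinarith [step1, step2]
  have hsum := Finset.sum_le_sum (fun i (_ : i ∈ Finset.univ) => per i)
  have hlhs : ∑ i, (η * q i * Real.log B - q i * (η^2/(1-η))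
      + ((1 - q i)*(p i + η) - q i * (1 - p i)) * L)
      = η * Real.log B - η^2/(1-η) + ((D:ℝ)*η - η) * L := by
    have e : ∀ i, η * q i * Real.log B - q i * (η^2/(1-η))
        + ((1 - q i)*(p i + η) - q i * (1 - p i)) * L
        = (η * Real.log B - η^2/(1-η) - (η+1)*L) * q i + L * p i + η * L := by
      intro i; ring
    rw [Finset.sum_congr rfl (fun i _ => e i), Finset.sum_add_distrib,
      Finset.sum_add_distrib, ← Finset.mul_sum, ← Finset.mul_sum, hqs, hps,
      Finset.sum_const, Finset.card_univ, Fintype.card_fin, nsmul_eq_mul]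
    ring
  rw [hlhs] at hsum
  -- final arithmetic
  have hD1 : (1:ℝ) ≤ (D:ℝ) := by
    rcases Nat.eq_zero_or_pos D with h0 | h1'
    · subst h0; rw [hBdef] at hB; simp at hB
    · exact_mod_cast h1'
  have hLlb : -(η/(1-η)) ≤ L := log_one_sub_ge hη1
  have hfin : η * Real.log B ≤ η * (∑ i, (p i / η + 1) * Real.log (1-η+η*t i) + D*η/(1-η)) := by
    have e : η * (∑ i, (p i / η + 1) * Real.log (1-η+η*t i) + D*η/(1-η))
        = ∑ i, (p i + η) * Real.log (1-η+η*t i) + (D:ℝ)*(η^2/(1-η)) := by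
      rw [mul_add, Finset.mul_sum]
      congr 1
      · exact Finset.sum_congr rfl (fun i _ => by field_simp; try ring)
      · field_simp
        try ring
    rw [e]
    have h4 : (0:ℝ) ≤ ((D:ℝ)-1)*η := by nlinarith
    have h5 := mul_le_mul_of_nonneg_left hLlb h4
    have e3 : ((D:ℝ)-1)*η*(-(η/(1-η))) = -(((D:ℝ)-1) * (η^2/(1-η))) := by ring
    have e4 : ((D:ℝ)-1) * (η^2/(1-η)) = (D:ℝ)*(η^2/(1-η)) - η^2/(1-η) := by ring
    have e5 : ((D:ℝ)*η - η)*L = ((D:ℝ)-1)*η*L := by ring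
    linarith [hsum, e3 ▸ h5]
  exact le_of_mul_le_mul_left hfin hη0

lemma trace_conj_diag {D : ℕ} (U : Matrix (Fin D) (Fin D) ℂ) (hU : star U * U = 1)
    (d : Fin D → ℂ) : (U * Matrix.diagonal d * star U).trace = ∑ i, d i := by
  rw [Matrix.trace_mul_cycle, hU, one_mul, Matrix.trace_diagonal]

lemma trace_mul_conj_diag {D : ℕ} (ρ U : Matrix (Fin D) (Fin D) ℂ) (d : Fin D → ℂ) :
    (ρ * (U * Matrix.diagonal d * star U)).trace = ∑ i, (star U * ρ * U) i i * d i := by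
  have e : ρ * (U * Matrix.diagonal d * star U) = (ρ * U) * Matrix.diagonal d * star U := by
    simp only [mul_assoc]
  rw [e, Matrix.trace_mul_cycle]
  have e2 : star U * (ρ * U) * Matrix.diagonal d
      = (star U * ρ * U) * Matrix.diagonal d := by simp only [mul_assoc]
  rw [e2]
  simp [Matrix.trace, Matrix.diag, Matrix.mul_diagonal]

theorem qsoftbayes_one_step_regret (D : ℕ) (η : ℝ) (hη0 : 0 < η) (hη1 : η < 1)
    (W A : Matrix (Fin D) (Fin D) ℂ) (hW : W.PosDef) (hWtr : (W.trace).re ≤ 1)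
    (hA : A.PosSemidef)
    (ρt : Matrix (Fin D) (Fin D) ℂ) (hρt : ρt = (((W.trace).re)⁻¹ : ℂ) • W)
    (hpos : 0 < ((A * ρt).trace).re)
    (W' : Matrix (Fin D) (Fin D) ℂ)
    (hW' : W' = matExp (matLog W +
      matLog ((((1 - η : ℝ)) : ℂ) • 1 + (((η / ((A * ρt).trace).re : ℝ)) : ℂ) • A)))
    (ρ : Matrix (Fin D) (Fin D) ℂ) (hρ : IsDensity ρ) (hρpos : 0 < ((A * ρ).trace).re) :
    (-Real.log ((A * ρt).trace).re) - (-Real.log ((A * ρ).trace).re) ≤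
      (1 / η) * ((ρ * (matLog W' - matLog W)).trace).re +
        ((matLog W' - matLog W).trace).re + D * η / (1 - η) := by
  have hAh : A.IsHermitian := hA.1
  have hWh : W.IsHermitian := hW.1
  set c : ℝ := ((A * ρt).trace).re with hc
  set U : Matrix (Fin D) (Fin D) ℂ := (hAh.eigenvectorUnitary : Matrix (Fin D) (Fin D) ℂ)
    with hUdef
  set μ : Fin D → ℝ := hAh.eigenvalues with hμ
  have hU1 : star U * U = 1 := Matrix.mem_unitaryGroup_iff'.mp (hAh.eigenvectorUnitary).2
  have hU2 : U * star U = 1 := Matrix.mem_unitaryGroup_iff.mp (hAh.eigenvectorUnitary).2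
  set g : ℝ → ℝ := fun x => (1 - η) + η / c * x with hg
  set M : Matrix (Fin D) (Fin D) ℂ :=
    (((1 - η : ℝ)) : ℂ) • 1 + (((η / c : ℝ)) : ℂ) • A with hM
  have hsp : A = U * Matrix.diagonal (RCLike.ofReal ∘ μ) * star U := hAh.spectral_theorem
  have hdiag : Matrix.diagonal (fun i => (g (μ i) : ℂ))
      = (((1 - η : ℝ)) : ℂ) • (1 : Matrix (Fin D) (Fin D) ℂ)
        + (((η / c : ℝ)) : ℂ) • Matrix.diagonal (RCLike.ofReal ∘ μ) := by
    ext i j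
    by_cases h : i = j
    · subst h
      simp [Matrix.diagonal, hg]
      try push_cast
      try ring
    · simp [Matrix.diagonal_apply_ne _ h, Matrix.one_apply_ne h, h]
  have hMU : M = U * Matrix.diagonal (fun i => (g (μ i) : ℂ)) * star U := by
    rw [hdiag, Matrix.mul_add, Matrix.add_mul, Matrix.mul_smul, Matrix.smul_mul,
      Matrix.mul_smul, Matrix.smul_mul, mul_one, hU2, ← hsp, hM]
  have hMg : cfc g A = M := by
    rw [hAh.cfc_eq g, Matrix.IsHermitian.cfc]
    exact hMU.symm
  have hMh : M.IsHermitian := hMg ▸ cfc_predicate g A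
  have hlogM : matLog M
      = U * Matrix.diagonal (fun i => ((Real.log (g (μ i))) : ℂ)) * star U := by
    have h2 := cfc_comp Real.log g A hAh (contOn_image _ _ _) (contOn_spectrum _ _)
    rw [matLog, matFun_eq_cfc _ hMh, ← hMg, ← h2, hAh.cfc_eq, Matrix.IsHermitian.cfc]
    rfl
  have hlogWh : (matLog W).IsHermitian := matFun_isHermitian _ hWh
  have hKh : (matLog W + matLog M).IsHermitian :=
    hlogWh.add (matFun_isHermitian _ hMh)
  have hW'log : matLog W' - matLog W = matLog M := by
    rw [hW', matLog_matExp hKh, add_sub_cancel_left]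
  -- diagonal entries of conjugated ρ
  set Q : Matrix (Fin D) (Fin D) ℂ := star U * ρ * U with hQdef
  have hQpsd : Q.PosSemidef := by
    have := hρ.1.conjTranspose_mul_mul_same U
    simpa [Matrix.star_eq_conjTranspose, hQdef] using this
  set p : Fin D → ℝ := fun i => (Q i i).re with hpdef
  have hQr : ∀ i, Q i i = (p i : ℂ) := by
    intro i
    have h := congrFun (congrFun hQpsd.1 i) i
    rw [Matrix.conjTranspose_apply] at h
    exact (Complex.conj_eq_iff_re.mp h).symm
  have hp0 : ∀ i, 0 ≤ p i := by
    intro i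
    have h := hQpsd.dotProduct_mulVec_nonneg (Pi.single i 1)
    have e : dotProduct (star (Pi.single i 1)) (Q *ᵥ (Pi.single i 1)) = Q i i := by
      simp [dotProduct, Matrix.mulVec, Pi.single_apply]
    rw [e] at h
    exact (Complex.le_def.mp h).1
  have hps : ∑ i, p i = 1 := by
    have htrQ : Q.trace = ρ.trace := by
      rw [hQdef, Matrix.trace_mul_cycle, hU2, one_mul]
    have : (∑ i, (p i : ℂ)) = Q.trace := by
      rw [Matrix.trace]
      exact Finset.sum_congr rfl (fun i _ => (hQr i).symm)
    have h1 : (∑ i, (p i : ℂ)) = 1 := by rw [this, htrQ, hρ.2]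
    exact_mod_cast h1
  have hb : ((A * ρ).trace).re = ∑ i, p i * μ i := by
    rw [Matrix.trace_mul_comm, hsp, trace_mul_conj_diag]
    rw [Complex.re_sum]
    refine Finset.sum_congr rfl (fun i _ => ?_)
    rw [← hQdef, hQr i]
    simp [Function.comp]
  have hμ0 : ∀ i, 0 ≤ μ i := fun i => hA.eigenvalues_nonneg i
  -- trace identities
  have hS1 : ((ρ * (matLog W' - matLog W)).trace).re = ∑ i, p i * Real.log (g (μ i)) := by
    rw [hW'log, hlogM, trace_mul_conj_diag, Complex.re_sum]
    refine Finset.sum_congr rfl (fun i _ => ?_)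
    rw [← hQdef, hQr i]
    simp
  have hS2 : ((matLog W' - matLog W).trace).re = ∑ i, Real.log (g (μ i)) := by
    rw [hW'log, hlogM, trace_conj_diag U hU1, Complex.re_sum]
    simp
  -- scalar inequality
  set t : Fin D → ℝ := fun i => μ i / c with htdef
  have hBt : ∑ i, p i * t i = (∑ i, p i * μ i) / c := by
    rw [Finset.sum_div]
    exact Finset.sum_congr rfl (fun i _ => by rw [htdef]; field_simp)
  have hBpos : 0 < ∑ i, p i * t i := by
    rw [hBt, ← hb]
    exact div_pos hρpos hpos
  have hsc := scalar_core D hη0 hη1 p t hp0 hps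
    (fun i => div_nonneg (hμ0 i) hpos.le) hBpos
  have hgt : ∀ i, 1 - η + η * t i = g (μ i) := by
    intro i
    rw [htdef, hg]
    field_simp
  have hlogB : Real.log (∑ i, p i * t i)
      = Real.log (((A * ρ).trace).re) - Real.log c := by
    rw [hBt, ← hb, Real.log_div hρpos.ne' hpos.ne']
  have hsum_split : ∑ i, (p i / η + 1) * Real.log (1 - η + η * t i)
      = (1/η) * (∑ i, p i * Real.log (g (μ i))) + ∑ i, Real.log (g (μ i)) := by
    rw [Finset.mul_sum, ← Finset.sum_add_distrib]
    refine Finset.sum_congr rfl (fun i _ => ?_)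
    rw [hgt i]
    field_simp
  rw [hlogB, hsum_split] at hsc
  rw [hS1, hS2]
  linarith [hsc]
end
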